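/- Let μ_σ and μ_ε be nonzero positive finite Borel measures on [0,1] satisfying the thermodynamical restriction (T), and let Ψ(s) be the principal square root of Φ_σ(s)/Φ_ε(s) for s ∈ ℂ∖(−∞,0] (well defined since Φ_ε has no zeros there). Then the imaginary part of Ψ has sign opposite to that of s: if Im s > 0 then Im Ψ(s) ≤ 0, if Im s < 0 then Im Ψ(s) ≥ 0, and if s ∈ (0,∞) then Ψ(s) is a positive real number. -/

import Mathlib

open MeasureTheory Complex Set

/-- `Phi μ s = ∫₀¹ s^α dμ(α)`, with the principal branch of the complex power. -/
noncomputable def Phi (μ : Measure ℝ) (s : ℂ) : ℂ :=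
  ∫ α in Set.Icc (0:ℝ) 1, s ^ (α : ℂ) ∂μ

/-- The thermodynamical restriction (T). -/
def TDrestriction (μσ με : Measure ℝ) : Prop :=
  ∀ E : Set (ℝ × ℝ), MeasurableSet E →
    E ⊆ {p : ℝ × ℝ | p.2 < p.1 ∧ p.1 ∈ Set.Icc (0:ℝ) 1 ∧ p.2 ∈ Set.Icc (0:ℝ) 1} →
    (μσ.prod με) E ≤ (με.prod μσ) E

/-- `Psi μσ με s` is the principal square root of `Φσ(s)/Φε(s)`. -/
noncomputable def Psi (μσ με : Measure ℝ) (s : ℂ) : ℂ :=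
  (Phi μσ s / Phi με s) ^ ((1 : ℂ) / 2)

lemma cpow_ofReal_re' {s : ℂ} (hs : s ≠ 0) (α : ℝ) :
    (s ^ (α : ℂ)).re = (‖s‖) ^ α * Real.cos (α * s.arg) := by
  rw [Complex.cpow_def_of_ne_zero hs, Complex.exp_re]
  have h1 : (Complex.log s * (α : ℂ)).re = α * Real.log (‖s‖) := by
    simp [Complex.mul_re, Complex.log_re]; ring
  have h2 : (Complex.log s * (α : ℂ)).im = α * s.arg := by
    simp [Complex.mul_im, Complex.log_im]; ring
  rw [h1, h2, Real.rpow_def_of_pos ((norm_pos_iff.mpr hs)), mul_comm (Real.log _)]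

lemma cpow_ofReal_im' {s : ℂ} (hs : s ≠ 0) (α : ℝ) :
    (s ^ (α : ℂ)).im = (‖s‖) ^ α * Real.sin (α * s.arg) := by
  rw [Complex.cpow_def_of_ne_zero hs, Complex.exp_im]
  have h1 : (Complex.log s * (α : ℂ)).re = α * Real.log (‖s‖) := by
    simp [Complex.mul_re, Complex.log_re]; ring
  have h2 : (Complex.log s * (α : ℂ)).im = α * s.arg := by
    simp [Complex.mul_im, Complex.log_im]; ring
  rw [h1, h2, Real.rpow_def_of_pos ((norm_pos_iff.mpr hs)), mul_comm (Real.log _)]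

lemma integrable_cpow' (μ : Measure ℝ) [IsFiniteMeasure μ]
    (hsupp : μ (Set.Icc (0:ℝ) 1)ᶜ = 0) (s : ℂ) (hs : s ≠ 0) :
    Integrable (fun α : ℝ => s ^ (α : ℂ)) μ := by
  have hres : μ.restrict (Set.Icc (0:ℝ) 1) = μ :=
    Measure.restrict_eq_self_of_ae_mem (by
      rw [MeasureTheory.ae_iff]
      convert hsupp using 2; rfl)
  have hc : Continuous (fun α : ℝ => s ^ (α : ℂ)) := by
    have : Continuous (fun α : ℝ => Complex.exp (Complex.log s * (α : ℂ))) := by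
      fun_prop
    refine this.congr fun α => ?_
    rw [Complex.cpow_def_of_ne_zero hs]
  have : IntegrableOn (fun α : ℝ => s ^ (α : ℂ)) (Set.Icc (0:ℝ) 1) μ :=
    hc.continuousOn.integrableOn_compact isCompact_Icc
  rwa [IntegrableOn, hres] at this

lemma restrict_Icc_eq' (μ : Measure ℝ) (hsupp : μ (Set.Icc (0:ℝ) 1)ᶜ = 0) :
    μ.restrict (Set.Icc (0:ℝ) 1) = μ :=
  Measure.restrict_eq_self_of_ae_mem (by
    rw [MeasureTheory.ae_iff]; convert hsupp using 2; rfl)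

lemma ae_mem_Icc' (μ : Measure ℝ) (hsupp : μ (Set.Icc (0:ℝ) 1)ᶜ = 0) :
    ∀ᵐ α ∂μ, α ∈ Set.Icc (0:ℝ) 1 := by
  rw [MeasureTheory.ae_iff]; convert hsupp using 2; rfl

lemma phi_mul_exp_re_pos (μ : Measure ℝ) [IsFiniteMeasure μ] (hμ : μ ≠ 0)
    (hsupp : μ (Set.Icc (0:ℝ) 1)ᶜ = 0) {s : ℂ} (hs : s ≠ 0) (hθ : |s.arg| < Real.pi) :
    0 < (Phi μ s * Complex.exp ((-(s.arg/2) : ℝ) * Complex.I)).re := by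
  have hres := restrict_Icc_eq' μ hsupp
  have hint := integrable_cpow' μ hsupp s hs
  set c : ℂ := Complex.exp ((-(s.arg/2) : ℝ) * Complex.I) with hc
  have hPhi : Phi μ s * c = ∫ α, s ^ (α:ℂ) * c ∂μ := by
    rw [Phi, hres, integral_mul_const]
  set h : ℝ → ℝ := fun α => ‖s‖ ^ α * Real.cos (α * s.arg - s.arg/2) with hhdef
  have hh : ∀ α : ℝ, (s ^ (α:ℂ) * c).re = h α := by
    intro α
    rw [Complex.mul_re, cpow_ofReal_re' hs, cpow_ofReal_im' hs, hc,
      Complex.exp_ofReal_mul_I_re, Complex.exp_ofReal_mul_I_im]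
    simp only [hhdef]
    rw [Real.cos_neg, Real.sin_neg, Real.cos_sub]
    ring
  have hpos : ∀ α ∈ Set.Icc (0:ℝ) 1, 0 < h α := by
    intro α hα
    have habs : |α * s.arg - s.arg/2| < Real.pi / 2 := by
      have h1 : α * s.arg - s.arg/2 = (α - 1/2) * s.arg := by ring
      rw [h1, abs_mul]
      have h2 : |α - 1/2| ≤ 1/2 := by
        rw [abs_le]
        constructor
        · linarith [hα.1]
        · linarith [hα.2]
      calc |α - 1/2| * |s.arg| ≤ (1/2) * |s.arg| :=
            mul_le_mul_of_nonneg_right h2 (abs_nonneg _)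
        _ < Real.pi / 2 := by linarith
    have := abs_lt.mp habs
    exact mul_pos (Real.rpow_pos_of_pos ((norm_pos_iff.mpr hs)) _)
      (Real.cos_pos_of_mem_Ioo ⟨this.1, this.2⟩)
  have h0 : Integrable (fun α : ℝ => (s ^ (α:ℂ) * c).re) μ := by
    simpa using (hint.mul_const c).re
  have hinth : Integrable h μ := h0.congr (Filter.Eventually.of_forall fun α => hh α)
  have hre : (Phi μ s * c).re = ∫ α, h α ∂μ := by
    have h1 := integral_re (hint.mul_const c)
    simp only [RCLike.re_to_complex] at h1
    rw [hPhi, ← h1]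
    simp only [hh]
  rw [hre]
  rw [integral_pos_iff_support_of_nonneg_ae ?_ hinth]
  · have hIcc : μ (Set.Icc (0:ℝ) 1) = μ Set.univ := by
      rw [← measure_add_measure_compl (measurableSet_Icc (a := (0:ℝ)) (b := 1)), hsupp, add_zero]
    calc (0:ENNReal) < μ Set.univ := Measure.measure_univ_pos.mpr hμ
      _ = μ (Set.Icc (0:ℝ) 1) := hIcc.symm
      _ ≤ μ (Function.support h) := measure_mono fun α hα => (hpos α hα).ne'
  · filter_upwards [ae_mem_Icc' μ hsupp] with α hα
    exact (hpos α hα).le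

noncomputable def gfun (s : ℂ) (p : ℝ × ℝ) : ℝ :=
  ‖s‖ ^ (p.1 + p.2) * Real.sin ((p.1 - p.2) * s.arg)

lemma gfun_swap (s : ℂ) (p : ℝ × ℝ) : gfun s (Prod.swap p) = - gfun s p := by
  simp only [gfun, Prod.swap, Prod.fst, Prod.snd]
  rw [add_comm]
  have : (p.2 - p.1) * s.arg = -((p.1 - p.2) * s.arg) := by ring
  rw [this, Real.sin_neg]
  ring

lemma integrable_conj_cpow' (μ : Measure ℝ) [IsFiniteMeasure μ]
    (hsupp : μ (Set.Icc (0:ℝ) 1)ᶜ = 0) (s : ℂ) (hs : s ≠ 0) :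
    Integrable (fun α : ℝ => (starRingEnd ℂ) (s ^ (α : ℂ))) μ := by
  have hres := restrict_Icc_eq' μ hsupp
  have h2 : Continuous (fun α : ℝ => s ^ (α : ℂ)) := by
    have h1 : Continuous (fun α : ℝ => Complex.exp (Complex.log s * (α : ℂ))) := by fun_prop
    exact h1.congr fun α => by rw [Complex.cpow_def_of_ne_zero hs]
  have hc : Continuous (fun α : ℝ => (starRingEnd ℂ) (s ^ (α : ℂ))) :=
    Complex.continuous_conj.comp h2
  have : IntegrableOn (fun α : ℝ => (starRingEnd ℂ) (s ^ (α : ℂ))) (Set.Icc (0:ℝ) 1) μ :=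
    hc.continuousOn.integrableOn_compact isCompact_Icc
  rwa [IntegrableOn, hres] at this

lemma phi_mul_conj_im (ν₁ ν₂ : Measure ℝ) [IsFiniteMeasure ν₁] [IsFiniteMeasure ν₂]
    (h1 : ν₁ (Set.Icc (0:ℝ) 1)ᶜ = 0) (h2 : ν₂ (Set.Icc (0:ℝ) 1)ᶜ = 0) {s : ℂ} (hs : s ≠ 0) :
    (Phi ν₁ s * (starRingEnd ℂ) (Phi ν₂ s)).im
      = (∫ p in {p : ℝ × ℝ | p.2 < p.1}, gfun s p ∂(ν₁.prod ν₂))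
        - (∫ p in {p : ℝ × ℝ | p.2 < p.1}, gfun s p ∂(ν₂.prod ν₁)) := by
  set F : ℝ → ℂ := fun α => s ^ (α : ℂ) with hF
  set G : ℝ × ℝ → ℂ := fun p => F p.1 * (starRingEnd ℂ) (F p.2) with hG
  have hint1 := integrable_cpow' ν₁ h1 s hs
  have hint2c := integrable_conj_cpow' ν₂ h2 s hs
  have hintG : Integrable G (ν₁.prod ν₂) := hint1.mul_prod hint2c
  have step1 : Phi ν₁ s * (starRingEnd ℂ) (Phi ν₂ s) = ∫ p, G p ∂(ν₁.prod ν₂) := by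
    rw [Phi, Phi, restrict_Icc_eq' _ h1, restrict_Icc_eq' _ h2, ← integral_conj,
      ← integral_prod_mul]
  have step3 : ∀ p : ℝ × ℝ, (G p).im = gfun s p := by
    intro p
    simp only [hG, hF]
    rw [Complex.mul_im, Complex.conj_re, Complex.conj_im,
      cpow_ofReal_re' hs, cpow_ofReal_im' hs, cpow_ofReal_re' hs, cpow_ofReal_im' hs,
      gfun, Real.rpow_add ((norm_pos_iff.mpr hs)), sub_mul, Real.sin_sub]
    ring
  have step2 : (Phi ν₁ s * (starRingEnd ℂ) (Phi ν₂ s)).im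
      = ∫ p, gfun s p ∂(ν₁.prod ν₂) := by
    rw [step1]
    have h := integral_im hintG
    simp only [RCLike.im_to_complex] at h
    rw [← h]
    simp only [step3]
  set Δ : Set (ℝ × ℝ) := {p : ℝ × ℝ | p.2 < p.1} with hΔdef
  have hΔ : MeasurableSet Δ := measurableSet_lt measurable_snd measurable_fst
  have hgint : Integrable (gfun s) (ν₁.prod ν₂) := by
    have := hintG.im
    simp only [RCLike.im_to_complex] at this
    exact this.congr (Filter.Eventually.of_forall step3)
  have hsplit : ∫ p, gfun s p ∂(ν₁.prod ν₂)
      = (∫ p in Δ, gfun s p ∂(ν₁.prod ν₂)) + (∫ p in Δᶜ, gfun s p ∂(ν₁.prod ν₂)) :=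
    (integral_add_compl hΔ hgint).symm
  have hcompl : Δᶜ = {p : ℝ × ℝ | p.1 < p.2} ∪ {p : ℝ × ℝ | p.1 = p.2} := by
    ext p
    simp only [hΔdef, Set.mem_compl_iff, Set.mem_setOf_eq, Set.mem_union, not_lt]
    exact ⟨fun h => h.lt_or_eq, fun h => h.elim le_of_lt le_of_eq⟩
  have hdiag : ∫ p in {p : ℝ × ℝ | p.1 = p.2}, gfun s p ∂(ν₁.prod ν₂) = 0 := by
    apply setIntegral_eq_zero_of_forall_eq_zero
    intro p hp
    simp only [Set.mem_setOf_eq] at hp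
    simp [gfun, hp]
  have hunion : ∫ p in Δᶜ, gfun s p ∂(ν₁.prod ν₂)
      = ∫ p in {p : ℝ × ℝ | p.1 < p.2}, gfun s p ∂(ν₁.prod ν₂) := by
    rw [hcompl, setIntegral_union ?_ ?_ hgint.integrableOn hgint.integrableOn, hdiag, add_zero]
    · rw [Set.disjoint_left]
      intro p hp hp2
      simp only [Set.mem_setOf_eq] at hp hp2
      exact absurd hp2 hp.ne
    · exact measurableSet_eq_fun measurable_fst measurable_snd
  have hswap : ∫ p in {p : ℝ × ℝ | p.1 < p.2}, gfun s p ∂(ν₁.prod ν₂)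
      = - ∫ p in Δ, gfun s p ∂(ν₂.prod ν₁) := by
    have hemb : MeasurableEmbedding (Prod.swap : ℝ × ℝ → ℝ × ℝ) :=
      (MeasurableEquiv.prodComm (α := ℝ) (β := ℝ)).measurableEmbedding
    have hmap : ν₁.prod ν₂ = Measure.map Prod.swap (ν₂.prod ν₁) := Measure.prod_swap.symm
    rw [hmap, hemb.setIntegral_map]
    have hpre : (Prod.swap : ℝ × ℝ → ℝ × ℝ) ⁻¹' {p : ℝ × ℝ | p.1 < p.2} = Δ := by
      ext p; simp [hΔdef, Prod.swap]
    rw [hpre, ← integral_neg]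
    apply setIntegral_congr_fun hΔ
    intro p _
    exact gfun_swap s p
  rw [step2, hsplit, hunion, hswap]
  ring

lemma prod_II_null (ν₁ ν₂ : Measure ℝ) [IsFiniteMeasure ν₁] [IsFiniteMeasure ν₂]
    (h1 : ν₁ (Set.Icc (0:ℝ) 1)ᶜ = 0) (h2 : ν₂ (Set.Icc (0:ℝ) 1)ᶜ = 0) :
    (ν₁.prod ν₂) ((Set.Icc (0:ℝ) 1 ×ˢ Set.Icc (0:ℝ) 1)ᶜ) = 0 := by
  have hsub : (Set.Icc (0:ℝ) 1 ×ˢ Set.Icc (0:ℝ) 1)ᶜ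
      ⊆ ((Set.Icc (0:ℝ) 1)ᶜ ×ˢ (Set.univ : Set ℝ)) ∪ ((Set.univ : Set ℝ) ×ˢ (Set.Icc (0:ℝ) 1)ᶜ) := by
    intro p hp
    simp only [Set.mem_compl_iff, Set.mem_prod, not_and_or, Set.mem_union, Set.mem_univ,
      and_true, true_and] at hp ⊢
    exact hp
  refine le_antisymm ?_ (by simp)
  calc (ν₁.prod ν₂) ((Set.Icc (0:ℝ) 1 ×ˢ Set.Icc (0:ℝ) 1)ᶜ)
      ≤ (ν₁.prod ν₂) (((Set.Icc (0:ℝ) 1)ᶜ ×ˢ (Set.univ : Set ℝ))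
          ∪ ((Set.univ : Set ℝ) ×ˢ (Set.Icc (0:ℝ) 1)ᶜ)) := measure_mono hsub
    _ ≤ (ν₁.prod ν₂) ((Set.Icc (0:ℝ) 1)ᶜ ×ˢ (Set.univ : Set ℝ))
          + (ν₁.prod ν₂) ((Set.univ : Set ℝ) ×ˢ (Set.Icc (0:ℝ) 1)ᶜ) := measure_union_le _ _
    _ = 0 := by rw [Measure.prod_prod, Measure.prod_prod, h1, h2, zero_mul, mul_zero, add_zero]

lemma restrict_le_restrict' (μσ με : Measure ℝ) [IsFiniteMeasure μσ] [IsFiniteMeasure με]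
    (hσsupp : μσ (Set.Icc (0:ℝ) 1)ᶜ = 0) (hεsupp : με (Set.Icc (0:ℝ) 1)ᶜ = 0)
    (hT : TDrestriction μσ με) :
    (μσ.prod με).restrict {p : ℝ × ℝ | p.2 < p.1}
      ≤ (με.prod μσ).restrict {p : ℝ × ℝ | p.2 < p.1} := by
  rw [Measure.le_iff]
  intro A hA
  have hΔ : MeasurableSet {p : ℝ × ℝ | p.2 < p.1} := measurableSet_lt measurable_snd measurable_fst
  rw [Measure.restrict_apply hA, Measure.restrict_apply hA]
  set Δ : Set (ℝ × ℝ) := {p : ℝ × ℝ | p.2 < p.1}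
  set II : Set (ℝ × ℝ) := Set.Icc (0:ℝ) 1 ×ˢ Set.Icc (0:ℝ) 1 with hIIdef
  have hIIm : MeasurableSet II := measurableSet_Icc.prod measurableSet_Icc
  have hE : MeasurableSet (A ∩ Δ ∩ II) := (hA.inter hΔ).inter hIIm
  have hsubset : A ∩ Δ ∩ II
      ⊆ {p : ℝ × ℝ | p.2 < p.1 ∧ p.1 ∈ Set.Icc (0:ℝ) 1 ∧ p.2 ∈ Set.Icc (0:ℝ) 1} := by
    intro p hp
    exact ⟨hp.1.2, hp.2.1, hp.2.2⟩
  calc (μσ.prod με) (A ∩ Δ) ≤ (μσ.prod με) ((A ∩ Δ ∩ II) ∪ IIᶜ) := by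
        apply measure_mono
        intro p hp
        by_cases hpII : p ∈ II
        · exact Or.inl ⟨hp, hpII⟩
        · exact Or.inr hpII
    _ ≤ (μσ.prod με) (A ∩ Δ ∩ II) + (μσ.prod με) IIᶜ := measure_union_le _ _
    _ = (μσ.prod με) (A ∩ Δ ∩ II) := by rw [prod_II_null μσ με hσsupp hεsupp, add_zero]
    _ ≤ (με.prod μσ) (A ∩ Δ ∩ II) := hT _ hE hsubset
    _ ≤ (με.prod μσ) (A ∩ Δ) := measure_mono Set.inter_subset_left

lemma integrable_gfun (ν₁ ν₂ : Measure ℝ) [IsFiniteMeasure ν₁] [IsFiniteMeasure ν₂]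
    (h1 : ν₁ (Set.Icc (0:ℝ) 1)ᶜ = 0) (h2 : ν₂ (Set.Icc (0:ℝ) 1)ᶜ = 0) {s : ℂ} (hs : s ≠ 0) :
    Integrable (gfun s) (ν₁.prod ν₂) := by
  have hintG : Integrable (fun p : ℝ × ℝ => s ^ (p.1 : ℂ) * (starRingEnd ℂ) (s ^ (p.2 : ℂ)))
      (ν₁.prod ν₂) := (integrable_cpow' ν₁ h1 s hs).mul_prod (integrable_conj_cpow' ν₂ h2 s hs)
  have := hintG.im
  simp only [RCLike.im_to_complex] at this
  refine this.congr (Filter.Eventually.of_forall fun p => ?_)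
  show (s ^ (p.1:ℂ) * (starRingEnd ℂ) (s ^ (p.2:ℂ))).im = gfun s p
  rw [Complex.mul_im, Complex.conj_re, Complex.conj_im,
    cpow_ofReal_re' hs, cpow_ofReal_im' hs, cpow_ofReal_re' hs, cpow_ofReal_im' hs,
    gfun, Real.rpow_add ((norm_pos_iff.mpr hs)), sub_mul, Real.sin_sub]
  ring

lemma key_im_sign (μσ με : Measure ℝ) [IsFiniteMeasure μσ] [IsFiniteMeasure με]
    (hσsupp : μσ (Set.Icc (0:ℝ) 1)ᶜ = 0) (hεsupp : με (Set.Icc (0:ℝ) 1)ᶜ = 0)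
    (hT : TDrestriction μσ με) {s : ℂ} (hs : s ≠ 0) :
    (0 ≤ s.arg → (Phi μσ s * (starRingEnd ℂ) (Phi με s)).im ≤ 0)
    ∧ (s.arg ≤ 0 → 0 ≤ (Phi μσ s * (starRingEnd ℂ) (Phi με s)).im) := by
  rw [phi_mul_conj_im μσ με hσsupp hεsupp hs]
  set Δ : Set (ℝ × ℝ) := {p : ℝ × ℝ | p.2 < p.1} with hΔdef
  have hΔ : MeasurableSet Δ := measurableSet_lt measurable_snd measurable_fst
  have hle := restrict_le_restrict' μσ με hσsupp hεsupp hT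
  have hgint1 : Integrable (gfun s) ((μσ.prod με).restrict Δ) :=
    (integrable_gfun μσ με hσsupp hεsupp hs).restrict
  have hgint2 : Integrable (gfun s) ((με.prod μσ).restrict Δ) :=
    (integrable_gfun με μσ hεsupp hσsupp hs).restrict
  have haeII1 : ∀ᵐ p ∂((μσ.prod με).restrict Δ), p ∈ Set.Icc (0:ℝ) 1 ×ˢ Set.Icc (0:ℝ) 1 := by
    apply ae_restrict_of_ae
    rw [MeasureTheory.ae_iff]
    convert prod_II_null μσ με hσsupp hεsupp using 2; rfl
  have haeII2 : ∀ᵐ p ∂((με.prod μσ).restrict Δ), p ∈ Set.Icc (0:ℝ) 1 ×ˢ Set.Icc (0:ℝ) 1 := by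
    apply ae_restrict_of_ae
    rw [MeasureTheory.ae_iff]
    convert prod_II_null με μσ hεsupp hσsupp using 2; rfl
  have haeΔ1 : ∀ᵐ p ∂((μσ.prod με).restrict Δ), p ∈ Δ := ae_restrict_mem hΔ
  have haeΔ2 : ∀ᵐ p ∂((με.prod μσ).restrict Δ), p ∈ Δ := ae_restrict_mem hΔ
  have hbound : ∀ p : ℝ × ℝ, p ∈ Set.Icc (0:ℝ) 1 ×ˢ Set.Icc (0:ℝ) 1 → p ∈ Δ →
      0 ≤ p.1 - p.2 ∧ p.1 - p.2 ≤ 1 := by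
    intro p hpII hpΔ
    have h1 := hpII.1.2
    have h2 := hpII.2.1
    have h3 : p.2 < p.1 := hpΔ
    constructor <;> linarith
  constructor
  · intro hθ
    have hnonneg : 0 ≤ᵐ[(με.prod μσ).restrict Δ] gfun s := by
      filter_upwards [haeII2, haeΔ2] with p hpII hpΔ
      obtain ⟨hd0, hd1⟩ := hbound p hpII hpΔ
      apply mul_nonneg (Real.rpow_pos_of_pos ((norm_pos_iff.mpr hs)) _).le
      apply Real.sin_nonneg_of_nonneg_of_le_pi (mul_nonneg hd0 hθ)
      calc (p.1 - p.2) * s.arg ≤ 1 * s.arg := mul_le_mul_of_nonneg_right hd1 hθ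
        _ = s.arg := one_mul _
        _ ≤ Real.pi := Complex.arg_le_pi s
    have := integral_mono_measure hle hnonneg hgint2
    linarith [this]
  · intro hθ
    have hnonneg : 0 ≤ᵐ[(με.prod μσ).restrict Δ] (fun p => - gfun s p) := by
      filter_upwards [haeII2, haeΔ2] with p hpII hpΔ
      obtain ⟨hd0, hd1⟩ := hbound p hpII hpΔ
      simp only [Pi.zero_apply, neg_nonneg]
      apply mul_nonpos_of_nonneg_of_nonpos (Real.rpow_pos_of_pos ((norm_pos_iff.mpr hs)) _).le
      apply Real.sin_nonpos_of_nonpos_of_neg_pi_le (mul_nonpos_of_nonneg_of_nonpos hd0 hθ)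
      calc -Real.pi ≤ s.arg := (Complex.neg_pi_lt_arg s).le
        _ = 1 * s.arg := (one_mul _).symm
        _ ≤ (p.1 - p.2) * s.arg := mul_le_mul_of_nonpos_right hd1 hθ
    have := integral_mono_measure hle hnonneg hgint2.neg
    rw [integral_neg, integral_neg] at this
    linarith [this]

lemma phi_im_eq_zero (μ : Measure ℝ) [IsFiniteMeasure μ]
    (hsupp : μ (Set.Icc (0:ℝ) 1)ᶜ = 0) {s : ℂ} (hs : s ≠ 0) (h0 : s.arg = 0) :
    (Phi μ s).im = 0 := by
  rw [Phi, restrict_Icc_eq' μ hsupp]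
  have h := integral_im (integrable_cpow' μ hsupp s hs)
  simp only [RCLike.im_to_complex] at h
  rw [← h]
  have hz : ∀ α : ℝ, (s ^ (α:ℂ)).im = 0 := fun α => by
    rw [cpow_ofReal_im' hs, h0, mul_zero, Real.sin_zero, mul_zero]
  simp [hz]

lemma cpow_half_im_re (w : ℂ) (hw : w ≠ 0) :
    (w ^ ((1:ℂ)/2)).im = Real.exp ((Complex.log w).re / 2) * Real.sin (w.arg / 2)
    ∧ (w ^ ((1:ℂ)/2)).re = Real.exp ((Complex.log w).re / 2) * Real.cos (w.arg / 2) := by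
  rw [Complex.cpow_def_of_ne_zero hw, Complex.exp_im, Complex.exp_re]
  have hre : (Complex.log w * ((1:ℂ)/2)).re = (Complex.log w).re / 2 := by
    simp [Complex.mul_re, Complex.div_re, Complex.div_im]
    ring
  have him : (Complex.log w * ((1:ℂ)/2)).im = w.arg / 2 := by
    simp [Complex.mul_im, Complex.div_re, Complex.div_im, Complex.log_im]
    ring
  rw [hre, him]
  exact ⟨rfl, rfl⟩

theorem stmt_13 (μσ με : Measure ℝ) [IsFiniteMeasure μσ] [IsFiniteMeasure με]
    (hσ : μσ ≠ 0) (hε : με ≠ 0)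
    (hσsupp : μσ (Set.Icc (0:ℝ) 1)ᶜ = 0) (hεsupp : με (Set.Icc (0:ℝ) 1)ᶜ = 0)
    (hT : TDrestriction μσ με) :
    ∀ s : ℂ, ¬(s.im = 0 ∧ s.re ≤ 0) →
      (0 < s.im → (Psi μσ με s).im ≤ 0)
      ∧ (s.im < 0 → 0 ≤ (Psi μσ με s).im)
      ∧ (s.im = 0 → 0 < s.re → (Psi μσ με s).im = 0 ∧ 0 < (Psi μσ με s).re) := by
  intro s hns
  have hs0 : s ≠ 0 := by
    rintro rfl
    exact hns ⟨rfl, le_refl 0⟩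
  have hargπ : |s.arg| < Real.pi := by
    rcases (Complex.arg_le_pi s).lt_or_eq with h | h
    · exact abs_lt.mpr ⟨Complex.neg_pi_lt_arg s, h⟩
    · exact absurd ⟨(Complex.arg_eq_pi_iff.mp h).2, (Complex.arg_eq_pi_iff.mp h).1.le⟩ hns
  set A := Phi μσ s with hAdef
  set B := Phi με s with hBdef
  set c : ℂ := Complex.exp ((-(s.arg/2) : ℝ) * Complex.I) with hcdef
  have hA : 0 < (A * c).re := phi_mul_exp_re_pos μσ hσ hσsupp hs0 hargπ
  have hB : 0 < (B * c).re := phi_mul_exp_re_pos με hε hεsupp hs0 hargπ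
  have hAne : A ≠ 0 := by rintro h; rw [h, zero_mul] at hA; simp at hA
  have hBne : B ≠ 0 := by rintro h; rw [h, zero_mul] at hB; simp at hB
  set w := A / B with hwdef
  have hwne : w ≠ 0 := div_ne_zero hAne hBne
  have hkey := key_im_sign μσ με hσsupp hεsupp hT hs0
  have hnormpos : 0 < Complex.normSq B := Complex.normSq_pos.mpr hBne
  have hwim_eq : w.im = (A * (starRingEnd ℂ) B).im / Complex.normSq B := by
    rw [hwdef, Complex.div_im, Complex.mul_im, Complex.conj_re, Complex.conj_im]
    ring
  have hnotneg : ¬ (w.im = 0 ∧ w.re ≤ 0) := by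
    rintro ⟨h1, h2⟩
    have hAB : A = w * B := (div_mul_cancel₀ A hBne).symm
    have hre : (A * c).re = w.re * (B * c).re := by
      rw [hAB, mul_assoc, Complex.mul_re, h1]
      ring
    nlinarith
  have hPsi : Psi μσ με s = w ^ ((1:ℂ)/2) := rfl
  have hcpow := cpow_half_im_re w hwne
  refine ⟨?_, ?_, ?_⟩
  · intro him
    have harg : 0 ≤ s.arg := Complex.arg_nonneg_iff.mpr him.le
    have him1 : (A * (starRingEnd ℂ) B).im ≤ 0 := hkey.1 harg
    have hwim : w.im ≤ 0 := by
      rw [hwim_eq, div_nonpos_iff]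
      right
      exact ⟨him1, hnormpos.le⟩
    have hargw : w.arg ≤ 0 := by
      rcases hwim.lt_or_eq with h | h
      · exact (Complex.arg_neg_iff.mpr h).le
      · have hwr : 0 < w.re := by
          by_contra hc
          exact hnotneg ⟨h, not_lt.mp hc⟩
        exact (Complex.arg_eq_zero_iff.mpr ⟨hwr.le, h⟩).le
    rw [hPsi, hcpow.1]
    apply mul_nonpos_of_nonneg_of_nonpos (Real.exp_pos _).le
    apply Real.sin_nonpos_of_nonpos_of_neg_pi_le (by linarith)
    have := Complex.neg_pi_lt_arg w
    have := Real.pi_pos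
    linarith
  · intro him
    have harg : s.arg ≤ 0 := (Complex.arg_neg_iff.mpr him).le
    have him1 : 0 ≤ (A * (starRingEnd ℂ) B).im := hkey.2 harg
    have hwim : 0 ≤ w.im := by
      rw [hwim_eq]
      exact div_nonneg him1 hnormpos.le
    have hargw : 0 ≤ w.arg := Complex.arg_nonneg_iff.mpr hwim
    rw [hPsi, hcpow.1]
    apply mul_nonneg (Real.exp_pos _).le
    apply Real.sin_nonneg_of_nonneg_of_le_pi (by linarith)
    have := Complex.arg_le_pi w
    have := Real.pi_pos
    linarith
  · intro him hre
    have harg0 : s.arg = 0 := Complex.arg_eq_zero_iff.mpr ⟨hre.le, him⟩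
    have hAim : A.im = 0 := phi_im_eq_zero μσ hσsupp hs0 harg0
    have hBim : B.im = 0 := phi_im_eq_zero με hεsupp hs0 harg0
    have hwim0 : w.im = 0 := by
      rw [hwdef, Complex.div_im, hAim, hBim]
      simp
    have hc1 : c = 1 := by
      rw [hcdef, harg0]
      norm_num
    rw [hc1, mul_one] at hA hB
    have hwre : 0 < w.re := by
      rw [hwdef, Complex.div_re, hAim, hBim]
      simpa using div_pos (mul_pos hA hB) hnormpos
    have hargw0 : w.arg = 0 := Complex.arg_eq_zero_iff.mpr ⟨hwre.le, hwim0⟩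
    constructor
    · rw [hPsi, hcpow.1, hargw0]
      norm_num
    · rw [hPsi, hcpow.2, hargw0]
      norm_num
      exact Real.exp_pos _
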